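/- arXiv:1305.4293 — 2 statements merged into one kernel-verified Lean document; each statement's English description precedes it below -/
import Mathlib

section
/- For natural numbers k < m, every continuous map from the k-sphere S^k to the m-sphere S^m is null-homotopic, i.e., homotopic to a constant map. -/
open Set Metric
open scoped ENNReal NNReal unitInterval

noncomputable section


variable {E : Type*} [NormedAddCommGroup E] [InnerProductSpace ℝ E]

private lemma dimH_sphere_le (n : ℕ) (hn : Module.finrank ℝ E = n + 1) [FiniteDimensional ℝ E] :
    dimH (univ : Set (sphere (0 : E) 1)) ≤ n := by
  have : Nontrivial E := Module.nontrivial_of_finrank_pos (R := ℝ) (by omega)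
  obtain ⟨v, hv⟩ : ∃ v : E, ‖v‖ = 1 := exists_norm_eq E zero_le_one
  -- the "north pole"
  set pole : sphere (0 : E) 1 := ⟨v, by simp [hv]⟩ with hpole
  have hrank : Module.finrank ℝ ((ℝ ∙ v)ᗮ : Submodule ℝ E) = n := by
    have h1 : Module.finrank ℝ (ℝ ∙ v) = 1 :=
      finrank_span_singleton (by intro h; rw [h] at hv; simp at hv)
    have := Submodule.finrank_add_finrank_orthogonal (K := ℝ∙v) (E := E)
    omega
  -- the inverse stereographic projection is locally Lipschitz
  have hF : LocallyLipschitz (stereoInvFunAux v ∘ ((↑) : (ℝ ∙ v)ᗮ → E)) := by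
    apply ContDiff.locallyLipschitz (𝕂 := ℝ)
    exact (contDiff_stereoInvFunAux (v := v)).comp
      ((ℝ ∙ v)ᗮ.subtypeL.contDiff) |>.of_le (by exact_mod_cast le_top)
  have key : (univ : Set (sphere (0 : E) 1)) ⊆ {pole} ∪
      ((↑) : sphere (0:E) 1 → E) ⁻¹' (range (stereoInvFunAux v ∘ ((↑) : (ℝ ∙ v)ᗮ → E))) := by
    rintro x -
    rcases eq_or_ne x pole with h | h
    · exact Or.inl h
    · refine Or.inr ?_
      have hx : (x : E) ≠ v := fun hc => h (Subtype.ext hc)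
      refine ⟨stereoToFun v x, ?_⟩
      have h2 : (stereoInvFun hv (stereoToFun v x) : E) = (x : E) :=
        congrArg Subtype.val (stereo_left_inv hv hx)
      exact h2
  calc dimH (univ : Set (sphere (0 : E) 1))
      ≤ dimH ({pole} ∪ ((↑) : sphere (0:E) 1 → E) ⁻¹' (range (stereoInvFunAux v ∘ ((↑) : (ℝ ∙ v)ᗮ → E))) : Set (sphere (0:E) 1)) := dimH_mono key
    _ ≤ n := by
        rw [dimH_union]
        apply max_le
        · simp [dimH_singleton]
        · refine le_trans (AntilipschitzWith.dimH_preimage_le (isometry_subtype_coe.antilipschitz) _) ?_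
          refine le_trans (dimH_range_le_of_locally_lipschitzOn hF) ?_
          rw [Real.dimH_univ_eq_finrank, hrank]

private lemma le_dimH_sphere (n : ℕ) (hn : Module.finrank ℝ E = n + 1) [FiniteDimensional ℝ E] :
    (n : ℝ≥0∞) ≤ dimH (univ : Set (sphere (0 : E) 1)) := by
  have : Nontrivial E := Module.nontrivial_of_finrank_pos (R := ℝ) (by omega)
  obtain ⟨v, hv⟩ : ∃ v : E, ‖v‖ = 1 := exists_norm_eq E zero_le_one
  set pole : sphere (0 : E) 1 := ⟨v, by simp [hv]⟩ with hpole
  have hrank : Module.finrank ℝ ((ℝ ∙ v)ᗮ : Submodule ℝ E) = n := by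
    have h1 : Module.finrank ℝ (ℝ ∙ v) = 1 :=
      finrank_span_singleton (by intro h; rw [h] at hv; simp at hv)
    have := Submodule.finrank_add_finrank_orthogonal (K := ℝ∙v) (E := E)
    omega
  have hUopen : IsOpen {y : E | innerSL ℝ v y ≠ (1:ℝ)} :=
    isOpen_compl_singleton.preimage (innerSL ℝ v).continuous
  have hsub : (univ : Set ((ℝ ∙ v)ᗮ : Submodule ℝ E)) ⊆
      (stereoToFun v ∘ ((↑) : sphere (0:E) 1 → E)) '' ({pole}ᶜ) := by
    rintro w -
    exact ⟨stereoInvFun hv w, by simpa using stereoInvFun_ne_north_pole hv w,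
      stereo_right_inv hv w⟩
  have hloc : ∀ x ∈ ({pole}ᶜ : Set (sphere (0:E) 1)), ∃ C : ℝ≥0,
      ∃ t ∈ nhdsWithin x ({pole}ᶜ : Set (sphere (0:E) 1)),
        LipschitzOnWith C (stereoToFun v ∘ ((↑) : sphere (0:E) 1 → E)) t := by
    intro x hx
    have hxv : (x : E) ≠ v := by
      intro hc
      exact hx (by simp only [mem_singleton_iff]; exact Subtype.ext hc)
    have hmem : (x : E) ∈ {y : E | innerSL ℝ v y ≠ (1:ℝ)} := by
      intro hc
      exact hxv ((inner_eq_one_iff_of_norm_eq_one hv (by simp)).mp hc).symm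
    have hcd : ContDiffAt ℝ 1 (stereoToFun v) (x : E) :=
      ((contDiffOn_stereoToFun (v := v)).contDiffAt
        (hUopen.mem_nhds hmem)).of_le (by exact_mod_cast le_top)
    obtain ⟨C, t, ht, hlip⟩ := hcd.exists_lipschitzOnWith
    refine ⟨C * 1, Subtype.val ⁻¹' t, ?_, ?_⟩
    · exact nhdsWithin_le_nhds (continuous_subtype_val.continuousAt.preimage_mem_nhds ht)
    · exact hlip.comp (isometry_subtype_coe.lipschitz.lipschitzOnWith (s := Subtype.val ⁻¹' t))
        (mapsTo_preimage _ _)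
  calc (n : ℝ≥0∞) = dimH (univ : Set ((ℝ ∙ v)ᗮ : Submodule ℝ E)) := by
        rw [Real.dimH_univ_eq_finrank, hrank]
    _ ≤ dimH ((stereoToFun v ∘ ((↑) : sphere (0:E) 1 → E)) '' ({pole}ᶜ)) := dimH_mono hsub
    _ ≤ dimH ({pole}ᶜ : Set (sphere (0:E) 1)) := dimH_image_le_of_locally_lipschitzOn hloc
    _ ≤ dimH (univ : Set (sphere (0:E) 1)) := dimH_mono (subset_univ _)


section LipAlg

variable {X : Type*} [MetricSpace X] [CompactSpace X]

lemma lipschitzWith_mul_of_bound {f g : X → ℝ} {Kf Kg A B : ℝ≥0}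
    (hf : LipschitzWith Kf f) (hg : LipschitzWith Kg g)
    (hA : ∀ x, |f x| ≤ (A : ℝ)) (hB : ∀ x, |g x| ≤ (B : ℝ)) :
    LipschitzWith (A * Kg + B * Kf) (fun x => f x * g x) := by
  apply LipschitzWith.of_dist_le_mul
  intro x y
  have h1 : dist (f x) (f y) ≤ (Kf : ℝ) * dist x y := hf.dist_le_mul x y
  have h2 : dist (g x) (g y) ≤ (Kg : ℝ) * dist x y := hg.dist_le_mul x y
  rw [Real.dist_eq] at h1 h2 ⊢
  have key : f x * g x - f y * g y = f x * (g x - g y) + (f x - f y) * g y := by ring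
  calc |f x * g x - f y * g y| ≤ |f x| * |g x - g y| + |f x - f y| * |g y| := by
        rw [key]; exact (abs_add_le _ _).trans (by rw [abs_mul, abs_mul])
    _ ≤ (A : ℝ) * ((Kg : ℝ) * dist x y) + (Kf : ℝ) * dist x y * (B : ℝ) :=
        add_le_add (mul_le_mul (hA x) h2 (abs_nonneg _) A.coe_nonneg)
          (mul_le_mul h1 (hB y) (abs_nonneg _) (by positivity))
    _ = ((A * Kg + B * Kf : ℝ≥0) : ℝ) * dist x y := by push_cast; ring

/-- The subalgebra of Lipschitz functions in `C(X, ℝ)`. -/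
def lipschitzSubalgebra : Subalgebra ℝ C(X, ℝ) where
  carrier := {f | ∃ K : ℝ≥0, LipschitzWith K f}
  add_mem' := by
    rintro f g ⟨Kf, hf⟩ ⟨Kg, hg⟩
    exact ⟨Kf + Kg, by exact hf.add hg⟩
  mul_mem' := by
    rintro f g ⟨Kf, hf⟩ ⟨Kg, hg⟩
    obtain ⟨A, hA⟩ : ∃ A : ℝ≥0, ∀ x, |f x| ≤ (A : ℝ) :=
      ⟨‖f‖₊, fun x => by simpa [Real.norm_eq_abs] using f.norm_coe_le_norm x⟩
    obtain ⟨B, hB⟩ : ∃ B : ℝ≥0, ∀ x, |g x| ≤ (B : ℝ) :=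
      ⟨‖g‖₊, fun x => by simpa [Real.norm_eq_abs] using g.norm_coe_le_norm x⟩
    exact ⟨_, by exact lipschitzWith_mul_of_bound hf hg hA hB⟩
  algebraMap_mem' := fun r => ⟨0, by simpa using LipschitzWith.const (b := r)⟩

end LipAlg

section Approx

variable {n : ℕ}

lemma exists_lipschitz_approx {k : ℕ} (m' : ℕ)
    (F : C(sphere (0 : EuclideanSpace ℝ (Fin (k+1))) 1, EuclideanSpace ℝ (Fin m')))
    {δ : ℝ} (hδ : 0 < δ) :
    ∃ (G : sphere (0 : EuclideanSpace ℝ (Fin (k+1))) 1 → EuclideanSpace ℝ (Fin m'))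
      (K : ℝ≥0), LipschitzWith K G ∧ ∀ x, ‖G x - F x‖ < δ := by
  have hsep : (lipschitzSubalgebra (X := sphere (0 : EuclideanSpace ℝ (Fin (k+1))) 1)).SeparatesPoints := by
    intro x y hxy
    obtain ⟨i, hi⟩ : ∃ i, (x : EuclideanSpace ℝ (Fin (k+1))) i ≠ (y : EuclideanSpace ℝ (Fin (k+1))) i := by
      by_contra hc
      push_neg at hc
      exact hxy (Subtype.ext (PiLp.ext hc))
    refine ⟨_, ⟨⟨fun p => (p : EuclideanSpace ℝ (Fin (k+1))) i,
        ((EuclideanSpace.proj i).continuous.comp continuous_subtype_val)⟩, ?_, rfl⟩, hi⟩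
    exact ⟨_, ((EuclideanSpace.proj (𝕜 := ℝ) i).lipschitz).comp isometry_subtype_coe.lipschitz⟩
  set ε : ℝ := δ / (m' + 1) with hε
  have hεpos : 0 < ε := by positivity
  have happrox : ∀ i : Fin m', ∃ (g : sphere (0 : EuclideanSpace ℝ (Fin (k+1))) 1 → ℝ) (K : ℝ≥0), LipschitzWith K g ∧
      ∀ x, |g x - (F x) i| < ε := by
    intro i
    obtain ⟨⟨g, ⟨K, hK⟩⟩, hg⟩ :=
      ContinuousMap.exists_mem_subalgebra_near_continuous_of_separatesPoints
        (lipschitzSubalgebra (X := sphere (0 : EuclideanSpace ℝ (Fin (k+1))) 1)) hsep (fun x => (F x) i)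
        (((EuclideanSpace.proj i).continuous).comp F.continuous) ε hεpos
    exact ⟨g, K, hK, fun x => by simpa [Real.norm_eq_abs] using hg x⟩
  choose g K hlip hclose using happrox
  set K₀ : ℝ≥0 := Finset.univ.sup K with hK₀
  refine ⟨fun x => (WithLp.toLp 2 (fun i => g i x) : EuclideanSpace ℝ (Fin m')),
    NNReal.sqrt m' * K₀, ?_, ?_⟩
  · apply LipschitzWith.of_dist_le_mul
    intro x y
    rw [EuclideanSpace.dist_eq]
    have hb : ∀ i : Fin m', dist (g i x) (g i y) ^ 2 ≤ ((K₀ : ℝ) * dist x y) ^ 2 := by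
      intro i
      have h1 : dist (g i x) (g i y) ≤ (K i : ℝ) * dist x y := (hlip i).dist_le_mul x y
      have h2 : (K i : ℝ) ≤ (K₀ : ℝ) := by
        exact_mod_cast NNReal.coe_le_coe.mpr (Finset.le_sup (Finset.mem_univ i))
      have : dist (g i x) (g i y) ≤ (K₀ : ℝ) * dist x y := by
        refine h1.trans ?_; gcongr
      exact pow_le_pow_left₀ dist_nonneg this 2
    calc Real.sqrt (∑ i, dist (g i x) (g i y) ^ 2)
        ≤ Real.sqrt (∑ _i : Fin m', ((K₀ : ℝ) * dist x y) ^ 2) := by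
          apply Real.sqrt_le_sqrt
          exact Finset.sum_le_sum fun i _ => hb i
      _ = Real.sqrt m' * ((K₀ : ℝ) * dist x y) := by
          rw [Finset.sum_const, Finset.card_univ, Fintype.card_fin, nsmul_eq_mul,
            Real.sqrt_mul (by positivity), Real.sqrt_sq (by positivity)]
      _ = ((NNReal.sqrt m' * K₀ : ℝ≥0) : ℝ) * dist x y := by
          push_cast [Real.coe_sqrt]
          ring
  · intro x
    rw [EuclideanSpace.norm_eq]
    simp only [PiLp.sub_apply]
    have hb : ∀ i : Fin m', ‖g i x - F x i‖ ^ 2 ≤ ε ^ 2 := fun i => by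
      have := (hclose i x).le
      rw [Real.norm_eq_abs]
      exact pow_le_pow_left₀ (abs_nonneg _) this 2
    refine lt_of_le_of_lt (Real.sqrt_le_sqrt (Finset.sum_le_sum (fun i _ => hb i))) ?_
    have heq : Real.sqrt (∑ _i : Fin m', ε ^ 2) = Real.sqrt m' * ε := by
      rw [Finset.sum_const, Finset.card_univ, Fintype.card_fin, nsmul_eq_mul,
        Real.sqrt_mul (by positivity), Real.sqrt_sq hεpos.le]
    rw [heq]
    have hlt : Real.sqrt m' < m' + 1 :=
      (Real.sqrt_lt' (by positivity)).mpr (by nlinarith [Nat.cast_nonneg (α := ℝ) m'])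
    calc Real.sqrt m' * ε < (m' + 1) * ε := mul_lt_mul_of_pos_right hlt hεpos
      _ = δ := by rw [hε]; field_simp


variable {F : Type*} [NormedAddCommGroup F] [NormedSpace ℝ F]

lemma lipschitzOnWith_normalize :
    LipschitzOnWith 4 (fun y : F => ‖y‖⁻¹ • y) {y | 1/2 ≤ ‖y‖} := by
  rw [lipschitzOnWith_iff_dist_le_mul]
  intro a ha b hb
  simp only [mem_setOf_eq] at ha hb
  have ha0 : 0 < ‖a‖ := lt_of_lt_of_le (by norm_num) ha
  have hb0 : 0 < ‖b‖ := lt_of_lt_of_le (by norm_num) hb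
  rw [dist_eq_norm, dist_eq_norm]
  have hsplit : ‖a‖⁻¹ • a - ‖b‖⁻¹ • b = ‖a‖⁻¹ • (a - b) + (‖a‖⁻¹ - ‖b‖⁻¹) • b := by
    rw [smul_sub, sub_smul]; abel
  have hdiff : |‖a‖⁻¹ - ‖b‖⁻¹| ≤ ‖a - b‖ * (‖a‖⁻¹ * ‖b‖⁻¹) := by
    have h1 : ‖a‖⁻¹ - ‖b‖⁻¹ = (‖b‖ - ‖a‖) * (‖a‖⁻¹ * ‖b‖⁻¹) := by
      field_simp
    rw [h1, abs_mul]
    have h2 : |‖b‖ - ‖a‖| ≤ ‖a - b‖ := by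
      rw [norm_sub_rev]; exact abs_norm_sub_norm_le b a
    have h3 : |‖a‖⁻¹ * ‖b‖⁻¹| = ‖a‖⁻¹ * ‖b‖⁻¹ := abs_of_pos (by positivity)
    rw [h3]
    exact mul_le_mul_of_nonneg_right h2 (by positivity)
  have hA : ‖a‖⁻¹ ≤ 2 := by
    rw [inv_le_comm₀ ha0 (by norm_num)]
    linarith
  calc ‖‖a‖⁻¹ • a - ‖b‖⁻¹ • b‖
      ≤ ‖‖a‖⁻¹ • (a - b)‖ + ‖(‖a‖⁻¹ - ‖b‖⁻¹) • b‖ := by rw [hsplit]; exact norm_add_le _ _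
    _ = ‖a‖⁻¹ * ‖a - b‖ + |‖a‖⁻¹ - ‖b‖⁻¹| * ‖b‖ := by
        rw [norm_smul, norm_smul, norm_inv, norm_norm, Real.norm_eq_abs]
    _ ≤ ‖a‖⁻¹ * ‖a - b‖ + (‖a - b‖ * (‖a‖⁻¹ * ‖b‖⁻¹)) * ‖b‖ :=
        add_le_add_right (mul_le_mul_of_nonneg_right hdiff (norm_nonneg _)) _
    _ = 2 * ‖a‖⁻¹ * ‖a - b‖ := by field_simp; ring
    _ ≤ (4 : ℝ≥0) * ‖a - b‖ := by
        push_cast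
        nlinarith [norm_nonneg (a - b)]

lemma homotopic_of_ne_neg {X : Type*} [TopologicalSpace X]
    (f₀ f₁ : C(X, sphere (0 : F) 1)) (h : ∀ x, (f₀ x : F) ≠ -(f₁ x : F)) :
    f₀.Homotopic f₁ := by
  set c : I × X → F := fun p => (1 - (p.1 : ℝ)) • (f₀ p.2 : F) + (p.1 : ℝ) • (f₁ p.2 : F)
    with hc_def
  have hc : Continuous c := by
    apply Continuous.add
    · exact (continuous_const.sub (continuous_subtype_val.comp continuous_fst)).smul
        (continuous_subtype_val.comp (f₀.continuous.comp continuous_snd))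
    · exact (continuous_subtype_val.comp continuous_fst).smul
        (continuous_subtype_val.comp (f₁.continuous.comp continuous_snd))
  have hne : ∀ p, c p ≠ 0 := by
    rintro ⟨t, x⟩ hzero
    have ht0 : (0:ℝ) ≤ t := t.2.1
    have ht1 : (t:ℝ) ≤ 1 := t.2.2
    have ha : ‖(f₀ x : F)‖ = 1 := by simpa using mem_sphere_zero_iff_norm.mp (f₀ x).2
    have hb : ‖(f₁ x : F)‖ = 1 := by simpa using mem_sphere_zero_iff_norm.mp (f₁ x).2
    have h1 : (1 - (t:ℝ)) • (f₀ x : F) = -((t:ℝ) • (f₁ x : F)) :=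
      eq_neg_of_add_eq_zero_left hzero
    have h2 : (1 - (t:ℝ)) = (t:ℝ) := by
      have := congrArg norm h1
      rw [norm_neg, norm_smul, norm_smul, ha, hb, Real.norm_eq_abs, Real.norm_eq_abs,
        abs_of_nonneg (by linarith), abs_of_nonneg ht0] at this
      simpa using this
    have ht : (t : ℝ) = 1/2 := by linarith
    rw [ht] at h1
    have h3 : (f₀ x : F) = -(f₁ x : F) := by
      have h4 : ((1:ℝ)/2) • (f₀ x : F) = ((1:ℝ)/2) • (-(f₁ x : F)) := by
        rw [smul_neg]
        convert h1 using 2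
        norm_num
      exact smul_right_injective F (by norm_num : (1:ℝ)/2 ≠ 0) h4
    exact h x h3
  have hmem : ∀ p, ‖c p‖⁻¹ • c p ∈ sphere (0 : F) 1 := by
    intro p
    rw [mem_sphere_zero_iff_norm, norm_smul, norm_inv, norm_norm,
      inv_mul_cancel₀ (norm_ne_zero_iff.mpr (hne p))]
  refine ⟨⟨⟨fun p => ⟨‖c p‖⁻¹ • c p, hmem p⟩, ?_⟩, ?_, ?_⟩⟩
  · exact Continuous.subtype_mk (((hc.norm).inv₀ fun p => norm_ne_zero_iff.mpr (hne p)).smul hc) _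
  · intro x
    ext
    have : c (0, x) = (f₀ x : F) := by simp [hc_def]
    simp only [this]
    have ha : ‖(f₀ x : F)‖ = 1 := by simpa using mem_sphere_zero_iff_norm.mp (f₀ x).2
    simp [ha]
  · intro x
    ext
    have : c (1, x) = (f₁ x : F) := by simp [hc_def]
    simp only [this]
    have hb : ‖(f₁ x : F)‖ = 1 := by simpa using mem_sphere_zero_iff_norm.mp (f₁ x).2
    simp [hb]
end Approx

/-- For `k < m`, every continuous map from the sphere `S^k` to the sphere `S^m`
is null-homotopic. -/
theorem nullhomotopic_of_sphere_map_to_higher_sphere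
    (k m : ℕ) (hkm : k < m)
    (f : C(Metric.sphere (0 : EuclideanSpace ℝ (Fin (k + 1))) 1,
          Metric.sphere (0 : EuclideanSpace ℝ (Fin (m + 1))) 1)) :
    f.Nullhomotopic := by
  classical
  -- Step 1: approximate the composition with the inclusion by a Lipschitz map
  obtain ⟨G, K, hGlip, hGF⟩ := exists_lipschitz_approx (m + 1)
    ⟨fun x => ((f x : EuclideanSpace ℝ (Fin (m + 1)))),
      continuous_subtype_val.comp f.continuous⟩ (δ := 1/2) (by norm_num)
  simp only [ContinuousMap.coe_mk] at hGF
  have hfnorm : ∀ x, ‖(f x : EuclideanSpace ℝ (Fin (m + 1)))‖ = 1 := fun x => by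
    simpa using mem_sphere_zero_iff_norm.mp (f x).2
  have hGnorm : ∀ x, 1/2 ≤ ‖G x‖ := by
    intro x
    have h1 := norm_sub_norm_le ((f x : EuclideanSpace ℝ (Fin (m + 1)))) (G x)
    have h2 := (hGF x).le
    rw [hfnorm x, norm_sub_rev] at h1
    linarith
  have hGpos : ∀ x, 0 < ‖G x‖ := fun x => lt_of_lt_of_le (by norm_num) (hGnorm x)
  have hGne : ∀ x, G x ≠ 0 := fun x => norm_ne_zero_iff.mp (hGpos x).ne'
  -- the normalized approximation, as a map to the sphere
  have hmem : ∀ x, ‖G x‖⁻¹ • G x ∈ sphere (0 : EuclideanSpace ℝ (Fin (m + 1))) 1 := by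
    intro x
    rw [mem_sphere_zero_iff_norm, norm_smul, norm_inv, norm_norm,
      inv_mul_cancel₀ (hGpos x).ne']
  have hGcont : Continuous G := hGlip.continuous
  set f' : C(Metric.sphere (0 : EuclideanSpace ℝ (Fin (k + 1))) 1,
      Metric.sphere (0 : EuclideanSpace ℝ (Fin (m + 1))) 1) :=
    ⟨fun x => ⟨‖G x‖⁻¹ • G x, hmem x⟩,
      Continuous.subtype_mk (((hGcont.norm).inv₀ fun x => (hGpos x).ne').smul hGcont) _⟩
    with hf'
  -- Step 2: `f` is homotopic to `f'`
  have step1 : f.Homotopic f' := by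
    apply homotopic_of_ne_neg
    intro x hx
    have hfx : (f x : EuclideanSpace ℝ (Fin (m + 1))) = -(‖G x‖⁻¹ • G x) := hx
    have hsub : G x - (f x : EuclideanSpace ℝ (Fin (m + 1)))
        = (1 + ‖G x‖⁻¹) • G x := by
      rw [hfx, add_smul, one_smul]
      abel
    have hnorm : ‖G x - (f x : EuclideanSpace ℝ (Fin (m + 1)))‖ = ‖G x‖ + 1 := by
      rw [hsub, norm_smul, Real.norm_eq_abs, abs_of_pos (by positivity), add_mul,
        one_mul, inv_mul_cancel₀ (hGpos x).ne']
    have := hGF x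
    rw [hnorm] at this
    have := hGnorm x
    linarith
  -- Step 3: `f'` is not surjective, by a Hausdorff-dimension argument
  obtain ⟨p, hp⟩ : ∃ p : Metric.sphere (0 : EuclideanSpace ℝ (Fin (m + 1))) 1,
      ∀ x, f' x ≠ p := by
    by_contra hc
    push_neg at hc
    -- the normalized map, valued in the ambient space, is Lipschitz
    have hlipcomp : LipschitzWith (4 * K)
        ((fun y : EuclideanSpace ℝ (Fin (m + 1)) => ‖y‖⁻¹ • y) ∘ G) := by
      rw [← lipschitzOnWith_univ]
      exact lipschitzOnWith_normalize.comp (hGlip.lipschitzOnWith)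
        (fun x _ => hGnorm x)
    have hrange : range ((fun y : EuclideanSpace ℝ (Fin (m + 1)) => ‖y‖⁻¹ • y) ∘ G)
        = (sphere (0 : EuclideanSpace ℝ (Fin (m + 1))) 1 : Set _) := by
      have h1 : ((fun y : EuclideanSpace ℝ (Fin (m + 1)) => ‖y‖⁻¹ • y) ∘ G)
          = Subtype.val ∘ (fun x => f' x) := rfl
      rw [h1, range_comp]
      have h2 : range (fun x => f' x) = univ := range_eq_univ.mpr fun p =>
        let ⟨x, hx⟩ := hc p; ⟨x, hx⟩
      rw [h2, image_univ, Subtype.range_coe]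
    have hub : dimH (range ((fun y : EuclideanSpace ℝ (Fin (m + 1)) => ‖y‖⁻¹ • y) ∘ G))
        ≤ (k : ℝ≥0∞) :=
      (hlipcomp.dimH_range_le).trans
        (dimH_sphere_le k finrank_euclideanSpace_fin)
    have hlb : (m : ℝ≥0∞) ≤ dimH (sphere (0 : EuclideanSpace ℝ (Fin (m + 1))) 1 :
        Set (EuclideanSpace ℝ (Fin (m + 1)))) := by
      refine le_trans (le_dimH_sphere m finrank_euclideanSpace_fin) ?_
      have := isometry_subtype_coe.dimH_image
        (univ : Set (sphere (0 : EuclideanSpace ℝ (Fin (m + 1))) 1))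
      rw [image_univ, Subtype.range_coe] at this
      exact this.ge
    rw [hrange] at hub
    have : (m : ℝ≥0∞) ≤ (k : ℝ≥0∞) := hlb.trans hub
    have : m ≤ k := by exact_mod_cast this
    omega
  -- Step 4: a non-surjective map to the sphere is null-homotopic
  have step2 : f'.Homotopic (ContinuousMap.const _ (-p)) := by
    apply homotopic_of_ne_neg
    intro x hx
    have h1 : (f' x : EuclideanSpace ℝ (Fin (m + 1)))
        = -((-p : Metric.sphere (0 : EuclideanSpace ℝ (Fin (m + 1))) 1) :
          EuclideanSpace ℝ (Fin (m + 1))) := hx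
    rw [coe_neg_sphere, neg_neg] at h1
    exact hp x (Subtype.ext h1)
  exact ⟨-p, step1.trans step2⟩

end
end

section
/- The unit sphere of an infinite-dimensional complex Hilbert space (for instance the unit sphere of ℓ²(ℕ, ℂ)) is a contractible topological space. -/
open Function ENNReal

noncomputable section

set_option maxHeartbeats 1000000
namespace ContractibleSphereAux

variable {I : Type*}

/-- Extension-by-zero of a sequence along an injection `g`. -/
def shiftFun (g : I → I) (y : I → ℂ) : I → ℂ := Function.extend g y 0

lemma norm_shiftFun (g : I → I) (hg : Injective g) (y : I → ℂ) :
    (fun j => ‖shiftFun g y j‖ ^ (2 : ℝ≥0∞).toReal)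
      = Function.extend g (fun i => ‖y i‖ ^ (2 : ℝ≥0∞).toReal) 0 := by
  funext j
  by_cases hj : ∃ i, g i = j
  · obtain ⟨i, rfl⟩ := hj
    simp [shiftFun, hg.extend_apply]
  · simp [shiftFun, Function.extend_apply' _ _ _ hj, Real.zero_rpow,
      ENNReal.toReal_ofNat]

lemma memℓp_shiftFun (g : I → I) (hg : Injective g) (y : lp (fun _ : I => ℂ) 2) :
    Memℓp (shiftFun g y) 2 := by
  apply memℓp_gen
  have h2 : (0:ℝ) < (2 : ℝ≥0∞).toReal := by norm_num
  have hs : Summable (fun i => ‖(y : ∀ _ : I, ℂ) i‖ ^ (2 : ℝ≥0∞).toReal) :=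
    (memℓp_gen_iff h2).1 (lp.memℓp y)
  rw [norm_shiftFun g hg]
  exact (summable_extend_zero hg).2 hs

/-- The "shift" linear isometry of `ℓ²` induced by an injection of the index set. -/
def shiftL (g : I → I) (hg : Injective g) :
    lp (fun _ : I => ℂ) 2 →ₗᵢ[ℂ] lp (fun _ : I => ℂ) 2 where
  toFun y := ⟨shiftFun g y, memℓp_shiftFun g hg y⟩
  map_add' y z := by
    apply lp.ext
    funext j
    have key : ∀ (u v : lp (fun _ : I => ℂ) 2) (j : I),
        ((u + v : lp (fun _ : I => ℂ) 2) : ∀ _ : I, ℂ) j = u j + v j := fun _ _ _ => rfl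
    show shiftFun g ((y + z : lp (fun _ : I => ℂ) 2) : ∀ _ : I, ℂ) j
        = shiftFun g (y : ∀ _ : I, ℂ) j + shiftFun g (z : ∀ _ : I, ℂ) j
    by_cases hj : ∃ i, g i = j
    · obtain ⟨i, rfl⟩ := hj
      simp only [shiftFun, hg.extend_apply, key]
    · simp only [shiftFun, Function.extend_apply' _ _ _ hj, Pi.zero_apply, add_zero]
  map_smul' c y := by
    apply lp.ext
    funext j
    have key : ∀ (u : lp (fun _ : I => ℂ) 2) (j : I),
        ((c • u : lp (fun _ : I => ℂ) 2) : ∀ _ : I, ℂ) j = c • (u : ∀ _ : I, ℂ) j :=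
      fun _ _ => rfl
    show shiftFun g ((c • y : lp (fun _ : I => ℂ) 2) : ∀ _ : I, ℂ) j
        = c • shiftFun g (y : ∀ _ : I, ℂ) j
    by_cases hj : ∃ i, g i = j
    · obtain ⟨i, rfl⟩ := hj
      simp only [shiftFun, hg.extend_apply, key]
    · simp only [shiftFun, Function.extend_apply' _ _ _ hj, Pi.zero_apply, smul_zero]
  norm_map' y := by
    have h2 : (0:ℝ) < (2 : ℝ≥0∞).toReal := by norm_num
    have h1 : HasSum (fun j => ‖shiftFun g y j‖ ^ (2 : ℝ≥0∞).toReal)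
        (‖(⟨shiftFun g y, memℓp_shiftFun g hg y⟩ : lp (fun _ : I => ℂ) 2)‖
          ^ (2 : ℝ≥0∞).toReal) :=
      lp.hasSum_norm h2 _
    have h0 : HasSum (fun j => ‖shiftFun g y j‖ ^ (2 : ℝ≥0∞).toReal)
        (‖y‖ ^ (2 : ℝ≥0∞).toReal) := by
      rw [norm_shiftFun g hg]
      exact (hasSum_extend_zero hg).2 (lp.hasSum_norm h2 y)
    have heq := h1.unique h0
    have hn1 : (0:ℝ) ≤ ‖(⟨shiftFun g y, memℓp_shiftFun g hg y⟩ : lp (fun _ : I => ℂ) 2)‖ :=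
      norm_nonneg _
    have hn2 : (0:ℝ) ≤ ‖y‖ := norm_nonneg _
    have h2' : (2 : ℝ≥0∞).toReal = ((2:ℕ):ℝ) := by norm_num
    rw [h2', Real.rpow_natCast, Real.rpow_natCast] at heq
    show ‖(⟨shiftFun g (y : ∀ _ : I, ℂ), memℓp_shiftFun g hg y⟩ : lp (fun _ : I => ℂ) 2)‖ = ‖y‖
    have hsq := congrArg Real.sqrt heq
    rwa [Real.sqrt_sq hn1, Real.sqrt_sq hn2] at hsq

/-- The index shift along an embedding `ℕ ↪ J`. -/
def shiftIdx {J : Type*} (f : ℕ ↪ J) : J → J := Function.extend f (fun n => f (n + 1)) id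

lemma shiftIdx_apply_f {J : Type*} (f : ℕ ↪ J) (n : ℕ) : shiftIdx f (f n) = f (n + 1) :=
  f.injective.extend_apply _ _ _

lemma shiftIdx_apply_not_mem {J : Type*} (f : ℕ ↪ J) {j : J} (hj : ¬∃ n, f n = j) :
    shiftIdx f j = j := by
  rw [shiftIdx, Function.extend_apply' _ _ _ hj]
  rfl

lemma shiftIdx_injective {J : Type*} (f : ℕ ↪ J) : Injective (shiftIdx f) := by
  intro a b hab
  by_cases ha : ∃ n, f n = a
  · obtain ⟨n, rfl⟩ := ha
    by_cases hb : ∃ m, f m = b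
    · obtain ⟨m, rfl⟩ := hb
      rw [shiftIdx_apply_f, shiftIdx_apply_f] at hab
      have := f.injective hab
      simp only [Nat.add_right_cancel_iff] at this
      rw [this]
    · rw [shiftIdx_apply_f, shiftIdx_apply_not_mem f hb] at hab
      exact absurd ⟨n + 1, hab⟩ hb
  · by_cases hb : ∃ m, f m = b
    · obtain ⟨m, rfl⟩ := hb
      rw [shiftIdx_apply_not_mem f ha, shiftIdx_apply_f] at hab
      exact absurd ⟨m + 1, hab.symm⟩ ha
    · rwa [shiftIdx_apply_not_mem f ha, shiftIdx_apply_not_mem f hb] at hab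

lemma shiftIdx_ne_f0 {J : Type*} (f : ℕ ↪ J) : ¬∃ i, shiftIdx f i = f 0 := by
  rintro ⟨i, hi⟩
  by_cases hii : ∃ n, f n = i
  · obtain ⟨n, rfl⟩ := hii
    rw [shiftIdx_apply_f] at hi
    exact Nat.succ_ne_zero n (f.injective hi)
  · rw [shiftIdx_apply_not_mem f hii] at hi
    exact hii ⟨0, hi.symm⟩

end ContractibleSphereAux
open Function ENNReal ComplexInnerProductSpace ContractibleSphereAux in
/-- The unit sphere of an infinite-dimensional complex Hilbert space (such as
`ℓ²(ℕ, ℂ)`) is contractible. -/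
theorem contractible_sphere_of_infinite_dimensional_hilbert
    (E : Type*) [NormedAddCommGroup E] [InnerProductSpace ℂ E] [CompleteSpace E]
    (h : ¬ FiniteDimensional ℂ E) :
    ContractibleSpace (Metric.sphere (0 : E) 1) := by
  classical
  obtain ⟨w, b, hb⟩ := exists_hilbertBasis ℂ E
  -- `w` is infinite
  have hwinf : w.Infinite := by
    intro hfin
    apply h
    have hsp : FiniteDimensional ℂ (Submodule.span ℂ w) :=
      FiniteDimensional.span_of_finite ℂ hfin
    have hcl : (Submodule.span ℂ w).topologicalClosure = ⊤ := by
      have hd := b.dense_span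
      rwa [hb, Subtype.range_coe] at hd
    have htop : Submodule.span ℂ w = ⊤ := by
      rw [← hcl]
      exact ((Submodule.span ℂ w).closed_of_finiteDimensional.submodule_topologicalClosure_eq).symm
    exact (LinearEquiv.ofTop _ htop).finiteDimensional
  haveI : Infinite ↥w := hwinf.to_subtype
  set f : ℕ ↪ ↥w := Infinite.natEmbedding ↥w with hf
  set g : ↥w → ↥w := shiftIdx f with hgdef
  have hg : Injective g := shiftIdx_injective f
  -- the shift isometry on `E`
  set S : E →ₗᵢ[ℂ] E :=
    b.repr.symm.toLinearIsometry.comp ((shiftL g hg).comp b.repr.toLinearIsometry) with hS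
  have hSapp : ∀ x : E, S x = b.repr.symm ((shiftL g hg) (b.repr x)) := fun x => rfl
  have hrepr : ∀ (x : E) (j : ↥w),
      (b.repr (S x) : ∀ _ : ↥w, ℂ) j = shiftFun g (b.repr x) j := by
    intro x j
    rw [hSapp, b.repr.apply_symm_apply]
    rfl
  -- `S` has no coefficient at `f 0`
  have hS0 : ∀ x : E, ⟪b (f 0), S x⟫ = 0 := by
    intro x
    rw [← b.repr_apply_apply, hrepr, shiftFun, Function.extend_apply' _ _ _ (shiftIdx_ne_f0 f)]
    rfl
  -- `S` has no eigenvector with eigenvalue `-1`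
  have hKey : ∀ x : E, S x = -x → x = 0 := by
    intro x hx
    have hy : ∀ j : ↥w, shiftFun g (b.repr x) j = -((b.repr x : ∀ _ : ↥w, ℂ) j) := by
      intro j
      have h1 := hrepr x j
      rw [hx, map_neg] at h1
      have h2 : ((-(b.repr x) : lp (fun _ : ↥w => ℂ) 2) : ∀ _ : ↥w, ℂ) j
          = -((b.repr x : ∀ _ : ↥w, ℂ) j) := rfl
      rw [h2] at h1
      exact h1.symm
    have horb : ∀ n : ℕ, (b.repr x : ∀ _ : ↥w, ℂ) (f n) = 0 := by
      intro n
      induction n with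
      | zero =>
        have h1 := hy (f 0)
        rw [shiftFun, Function.extend_apply' _ _ _ (shiftIdx_ne_f0 f)] at h1
        have h2 : -((b.repr x : ∀ _ : ↥w, ℂ) (f 0)) = 0 := h1.symm
        simpa using h2
      | succ n ih =>
        have hgf : g (f n) = f (n + 1) := shiftIdx_apply_f f n
        have h1 := hy (f (n + 1))
        rw [← hgf, shiftFun, hg.extend_apply, ih, hgf] at h1
        simpa using h1.symm
    have hzero : ∀ j : ↥w, (b.repr x : ∀ _ : ↥w, ℂ) j = 0 := by
      intro j
      by_cases hj : ∃ n, f n = j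
      · obtain ⟨n, rfl⟩ := hj
        exact horb n
      · have hgj : g j = j := shiftIdx_apply_not_mem f hj
        have h1 := hy j
        conv_lhs at h1 => rw [← hgj]
        rw [shiftFun, hg.extend_apply] at h1
        exact CharZero.eq_neg_self_iff.mp h1
    have hrx : b.repr x = 0 := by
      apply lp.ext
      funext j
      simpa using hzero j
    have := congrArg b.repr.symm hrx
    rwa [b.repr.symm_apply_apply, map_zero] at this
  -- the distinguished unit vector
  set v : E := b (f 0) with hvdef
  have hv : ‖v‖ = 1 := b.orthonormal.1 (f 0)
  -- nonvanishing of the two convex homotopy paths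
  have hnv1 : ∀ t : ℝ, 0 ≤ t → t ≤ 1 → ∀ x : E, ‖x‖ = 1 →
      (1 - t) • x + t • S x ≠ 0 := by
    intro t ht0 ht1 x hx hc
    have hne : (1 - t) • x = -(t • S x) := eq_neg_of_add_eq_zero_left hc
    have hnorm : ‖(1 - t) • x‖ = ‖t • S x‖ := by rw [hne, norm_neg]
    rw [norm_smul, norm_smul, hx, S.norm_map, hx, Real.norm_eq_abs, Real.norm_eq_abs,
      abs_of_nonneg (by linarith), abs_of_nonneg ht0] at hnorm
    have ht : t = 1 / 2 := by linarith
    subst ht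
    have h2 : (1 - 1 / 2 : ℝ) • x + (1 / 2 : ℝ) • S x = (1 / 2 : ℝ) • (x + S x) := by
      rw [smul_add]; norm_num
    rw [h2, smul_eq_zero] at hc
    have h3 : x + S x = 0 := hc.resolve_left (by norm_num)
    have h4 : S x = -x := by
      have := eq_neg_of_add_eq_zero_right h3
      exact this
    have h5 := hKey x h4
    rw [h5, norm_zero] at hx
    norm_num at hx
  have hnv2 : ∀ t : ℝ, 0 ≤ t → t ≤ 1 → ∀ x : E, ‖x‖ = 1 →
      (1 - t) • S x + t • v ≠ 0 := by
    intro t ht0 ht1 x hx hc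
    have hne : (1 - t) • S x = -(t • v) := eq_neg_of_add_eq_zero_left hc
    have hnorm : ‖(1 - t) • S x‖ = ‖t • v‖ := by rw [hne, norm_neg]
    rw [norm_smul, norm_smul, S.norm_map, hx, hv, Real.norm_eq_abs, Real.norm_eq_abs,
      abs_of_nonneg (by linarith), abs_of_nonneg ht0] at hnorm
    have ht : t = 1 / 2 := by linarith
    subst ht
    have h2 : (1 - 1 / 2 : ℝ) • S x + (1 / 2 : ℝ) • v = (1 / 2 : ℝ) • (S x + v) := by
      rw [smul_add]; norm_num
    rw [h2, smul_eq_zero] at hc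
    have h3 : S x + v = 0 := hc.resolve_left (by norm_num)
    have h4 : S x = -v := eq_neg_of_add_eq_zero_left h3
    have h5 := hS0 x
    rw [h4, inner_neg_right, inner_self_eq_norm_sq_to_K, hv] at h5
    norm_num at h5
  -- now build the homotopies on the sphere
  have hmem : ∀ x : Metric.sphere (0 : E) 1, ‖(x : E)‖ = 1 := by
    intro x
    have := x.2
    rwa [mem_sphere_zero_iff_norm] at this
  have hScont : Continuous fun x : Metric.sphere (0 : E) 1 => S (x : E) :=
    S.continuous.comp continuous_subtype_val
  set SC : C(Metric.sphere (0 : E) 1, Metric.sphere (0 : E) 1) :=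
    ⟨fun x => ⟨S (x : E), mem_sphere_zero_iff_norm.mpr (by rw [S.norm_map]; exact hmem x)⟩,
      hScont.subtype_mk _⟩ with hSC
  set vS : Metric.sphere (0 : E) 1 := ⟨v, mem_sphere_zero_iff_norm.mpr hv⟩ with hvS
  -- first homotopy: from the identity to `SC`
  set u1 : unitInterval × Metric.sphere (0 : E) 1 → E :=
    fun p => (1 - (p.1 : ℝ)) • (p.2 : E) + (p.1 : ℝ) • S (p.2 : E) with hu1def
  have hu1c : Continuous u1 := by
    apply Continuous.add
    · exact (continuous_const.sub
        (continuous_subtype_val.comp continuous_fst)).smul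
        (continuous_subtype_val.comp continuous_snd)
    · exact (continuous_subtype_val.comp continuous_fst).smul
        (S.continuous.comp (continuous_subtype_val.comp continuous_snd))
  have hu1 : ∀ p, u1 p ≠ 0 := fun p => hnv1 p.1 p.1.2.1 p.1.2.2 p.2 (hmem p.2)
  set u2 : unitInterval × Metric.sphere (0 : E) 1 → E :=
    fun p => (1 - (p.1 : ℝ)) • S (p.2 : E) + (p.1 : ℝ) • v with hu2def
  have hu2c : Continuous u2 := by
    apply Continuous.add
    · exact (continuous_const.sub
        (continuous_subtype_val.comp continuous_fst)).smul
        (S.continuous.comp (continuous_subtype_val.comp continuous_snd))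
    · exact (continuous_subtype_val.comp continuous_fst).smul continuous_const
  have hu2 : ∀ p, u2 p ≠ 0 := fun p => hnv2 p.1 p.1.2.1 p.1.2.2 p.2 (hmem p.2)
  have hnorm1 : ∀ p, ‖‖u1 p‖⁻¹ • u1 p‖ = 1 := by
    intro p
    rw [norm_smul, norm_inv, norm_norm, inv_mul_cancel₀ (norm_ne_zero_iff.mpr (hu1 p))]
  have hnorm2 : ∀ p, ‖‖u2 p‖⁻¹ • u2 p‖ = 1 := by
    intro p
    rw [norm_smul, norm_inv, norm_norm, inv_mul_cancel₀ (norm_ne_zero_iff.mpr (hu2 p))]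
  set H1 : ContinuousMap.Homotopy (ContinuousMap.id (Metric.sphere (0 : E) 1)) SC :=
  { toFun := fun p => ⟨‖u1 p‖⁻¹ • u1 p, mem_sphere_zero_iff_norm.mpr (hnorm1 p)⟩
    continuous_toFun := by
      apply Continuous.subtype_mk
      exact (hu1c.norm.inv₀ fun p => norm_ne_zero_iff.mpr (hu1 p)).smul hu1c
    map_zero_left := by
      intro x
      apply Subtype.ext
      show ‖u1 (0, x)‖⁻¹ • u1 (0, x) = (x : E)
      have he : u1 (0, x) = (x : E) := by
        simp [hu1def]
      rw [he, hmem x]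
      norm_num
    map_one_left := by
      intro x
      apply Subtype.ext
      show ‖u1 (1, x)‖⁻¹ • u1 (1, x) = S (x : E)
      have he : u1 (1, x) = S (x : E) := by
        simp [hu1def]
      rw [he, S.norm_map, hmem x]
      norm_num }
  set H2 : ContinuousMap.Homotopy SC (ContinuousMap.const (Metric.sphere (0 : E) 1) vS) :=
  { toFun := fun p => ⟨‖u2 p‖⁻¹ • u2 p, mem_sphere_zero_iff_norm.mpr (hnorm2 p)⟩
    continuous_toFun := by
      apply Continuous.subtype_mk
      exact (hu2c.norm.inv₀ fun p => norm_ne_zero_iff.mpr (hu2 p)).smul hu2c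
    map_zero_left := by
      intro x
      apply Subtype.ext
      show ‖u2 (0, x)‖⁻¹ • u2 (0, x) = S (x : E)
      have he : u2 (0, x) = S (x : E) := by
        simp [hu2def]
      rw [he, S.norm_map, hmem x]
      norm_num
    map_one_left := by
      intro x
      apply Subtype.ext
      show ‖u2 (1, x)‖⁻¹ • u2 (1, x) = v
      have he : u2 (1, x) = v := by
        simp [hu2def]
      rw [he, hv]
      norm_num }
  rw [contractible_iff_id_nullhomotopic]
  exact ⟨vS, ⟨H1.trans H2⟩⟩
end
end
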